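/- Let α ∈ (0,1), B > 0, and let p be a probability density on (0,∞) with p(y) = y^{-1-α} for all y ≥ B. Let h > 0, L > 0, and let f : [0,∞) → ℝ be continuous with f(0) = 0, f(y) → 0 as y → ∞, and |f(y)| ≤ L·y for all y ∈ [0, B·h]. Then |h^{-α} ∫₀^∞ f(h·y) p(y) dy − ∫₀^∞ f(y) y^{-1-α} dy| ≤ C_B · L · h^{1-α}, where C_B = B^{1-α}/(1-α) + ∫₀^B y·p(y) dy. -/

import Mathlib

open MeasureTheory Set Filter

/-- Proposition 5.1 (rate of convergence for the standard CTRW), Lipschitz case: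
if `p` is a probability density on `(0,∞)` with `p(y) = y^{-1-α}` for `y ≥ B`,
and `f` is continuous on `[0,∞)` with `f(0)=0`, `f(∞)=0` and `|f(y)| ≤ L y` on `[0,Bh]`,
then `|h^{-α} ∫₀^∞ f(hy) p(y) dy − ∫₀^∞ f(y) y^{-1-α} dy| ≤ C_B L h^{1-α}` with
`C_B = B^{1-α}/(1-α) + ∫₀^B y p(y) dy`. -/
theorem stmt_0
    (α B h L : ℝ) (hα : α ∈ Set.Ioo (0:ℝ) 1) (hB : 0 < B) (hh : 0 < h) (hL : 0 < L)
    (p : ℝ → ℝ) (hp_meas : Measurable p)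
    (hp_nonneg : ∀ y ∈ Set.Ioi (0:ℝ), 0 ≤ p y)
    (hp_prob : ∫ y in Set.Ioi (0:ℝ), p y = 1)
    (hp_tail : ∀ y : ℝ, B ≤ y → p y = y ^ (-1 - α))
    (f : ℝ → ℝ) (hf_cont : ContinuousOn f (Set.Ici 0))
    (hf0 : f 0 = 0)
    (hf_inf : Tendsto f atTop (nhds 0))
    (hf_lip : ∀ y ∈ Set.Icc (0:ℝ) (B * h), |f y| ≤ L * y) :
    |h ^ (-α) * (∫ y in Set.Ioi (0:ℝ), f (h * y) * p y)
        - ∫ y in Set.Ioi (0:ℝ), f y * y ^ (-1 - α)|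
      ≤ (B ^ (1 - α) / (1 - α) + ∫ y in Set.Ioc (0:ℝ) B, y * p y) * L * h ^ (1 - α) := by
  obtain ⟨hα0, hα1⟩ := hα
  have hBh : 0 < B * h := mul_pos hB hh
  -- f is bounded on [0, ∞)
  obtain ⟨M, hM0, hM⟩ : ∃ M, 0 ≤ M ∧ ∀ y, 0 ≤ y → |f y| ≤ M := by
    have h1 : ∀ᶠ y in atTop, ‖f y‖ < 1 := by
      have := Metric.tendsto_nhds.mp hf_inf 1 one_pos
      simpa [Real.dist_eq] using this
    obtain ⟨C, hC⟩ := eventually_atTop.mp h1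
    obtain ⟨M₁, hM₁⟩ := (isCompact_Icc (a := (0:ℝ)) (b := max C 0)).exists_bound_of_continuousOn
      (hf_cont.mono (Icc_subset_Ici_self))
    refine ⟨max M₁ 1, le_trans zero_le_one (le_max_right _ _), fun y hy => ?_⟩
    rcases le_or_gt y (max C 0) with hy' | hy'
    · exact le_trans (hM₁ y ⟨hy, hy'⟩) (le_max_left _ _)
    · have := hC y (le_of_lt (lt_of_le_of_lt (le_max_left C 0) hy'))
      exact le_trans (le_of_lt this) (le_max_right _ _)
  -- p is integrable on (0,∞)
  have hp_int : IntegrableOn p (Ioi 0) := by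
    by_contra hcon
    rw [MeasureTheory.integral_undef hcon] at hp_prob
    exact one_ne_zero hp_prob.symm
  -- measurability helpers
  have hrpow_cont : ContinuousOn (fun y : ℝ => y ^ (-1 - α)) (Ioi 0) := fun x hx =>
    (Real.continuousAt_rpow_const x _ (Or.inl (ne_of_gt hx))).continuousWithinAt
  have hg_meas : ∀ s : Set ℝ, MeasurableSet s → s ⊆ Ioi 0 →
      AEStronglyMeasurable (fun y => f y * y ^ (-1 - α)) (volume.restrict s) := by
    intro s hsm hs
    exact (((hf_cont.mono (hs.trans Ioi_subset_Ici_self)).mul (hrpow_cont.mono hs)).aestronglyMeasurable hsm)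
  have hfh_cont : ContinuousOn (fun y => f (h * y)) (Ici 0) :=
    hf_cont.comp (continuous_const.mul continuous_id).continuousOn
      (fun y hy => mul_nonneg hh.le hy)
  -- integrability of the first integrand
  have hint1 : IntegrableOn (fun y => f (h * y) * p y) (Ioi 0) := by
    apply Integrable.mono (hp_int.const_mul M)
    · exact ((hfh_cont.mono (Ioi_subset_Ici le_rfl)).aestronglyMeasurable measurableSet_Ioi).mul
        hp_meas.aestronglyMeasurable.restrict
    · filter_upwards [ae_restrict_mem measurableSet_Ioi] with y hy
      have hy0 : (0:ℝ) < y := hy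
      have hpb := hp_nonneg y hy
      rw [Real.norm_eq_abs, Real.norm_eq_abs, abs_mul, abs_of_nonneg hpb,
        abs_of_nonneg (mul_nonneg hM0 hpb)]
      exact mul_le_mul_of_nonneg_right (hM (h * y) (mul_nonneg hh.le hy0.le)) hpb
  -- integrability of y ^ (-α) near 0
  have hrpow_int : IntegrableOn (fun y : ℝ => y ^ (-α)) (Ioc 0 (B * h)) := by
    have := intervalIntegral.intervalIntegrable_rpow' (a := 0) (b := B * h)
      (by linarith : (-1:ℝ) < -α)
    rwa [intervalIntegrable_iff_integrableOn_Ioc_of_le hBh.le] at this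
  -- integrability of f y * y ^ (-1-α) near 0
  have hyy : ∀ y : ℝ, 0 < y → y * y ^ (-1 - α) = y ^ (-α) := by
    intro y hy0
    have := Real.rpow_add hy0 1 (-1 - α)
    rw [Real.rpow_one] at this
    rw [← this]; congr 1; ring
  have hint_g_small : IntegrableOn (fun y => f y * y ^ (-1 - α)) (Ioc 0 (B * h)) := by
    apply Integrable.mono (hrpow_int.const_mul L)
      (hg_meas _ measurableSet_Ioc Ioc_subset_Ioi_self)
    filter_upwards [ae_restrict_mem measurableSet_Ioc] with y hy
    have hy0 : (0:ℝ) < y := hy.1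
    have hrp : (0:ℝ) ≤ y ^ (-1 - α) := Real.rpow_nonneg hy0.le _
    rw [Real.norm_eq_abs, Real.norm_eq_abs, abs_mul, abs_of_nonneg hrp,
      abs_of_nonneg (mul_nonneg hL.le (Real.rpow_nonneg hy0.le _))]
    calc |f y| * y ^ (-1 - α) ≤ L * y * y ^ (-1 - α) :=
          mul_le_mul_of_nonneg_right (hf_lip y ⟨hy0.le, hy.2⟩) hrp
      _ = L * y ^ (-α) := by rw [mul_assoc, hyy y hy0]
  -- integrability of f y * y ^ (-1-α) at infinity
  have hint_g_big : IntegrableOn (fun y => f y * y ^ (-1 - α)) (Ioi (B * h)) := by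
    apply Integrable.mono ((integrableOn_Ioi_rpow_of_lt (by linarith : (-1 - α) < -1) hBh).const_mul M)
      (hg_meas _ measurableSet_Ioi (Ioi_subset_Ioi hBh.le))
    filter_upwards [ae_restrict_mem measurableSet_Ioi] with y hy
    have hy0 : (0:ℝ) < y := lt_trans hBh hy
    have hrp : (0:ℝ) ≤ y ^ (-1 - α) := Real.rpow_nonneg hy0.le _
    rw [Real.norm_eq_abs, Real.norm_eq_abs, abs_mul, abs_of_nonneg hrp,
      abs_of_nonneg (mul_nonneg hM0 hrp)]
    exact mul_le_mul_of_nonneg_right (hM y hy0.le) hrp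
  have hint_g : IntegrableOn (fun y => f y * y ^ (-1 - α)) (Ioi 0) := by
    have := hint_g_small.union hint_g_big
    rwa [Ioc_union_Ioi_eq_Ioi hBh.le] at this
  -- integrability of y * p y on (0, B]
  have hint_yp : IntegrableOn (fun y => y * p y) (Ioc 0 B) := by
    apply Integrable.mono (((hp_int.mono_set Ioc_subset_Ioi_self)).const_mul B)
      ((measurable_id'.mul hp_meas).aestronglyMeasurable.restrict)
    filter_upwards [ae_restrict_mem measurableSet_Ioc] with y hy
    have hpb := hp_nonneg y hy.1
    change ‖y * p y‖ ≤ _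
    rw [Real.norm_eq_abs, Real.norm_eq_abs, abs_mul, abs_of_nonneg hpb, abs_of_pos hy.1,
      abs_of_nonneg (mul_nonneg hB.le hpb)]
    exact mul_le_mul_of_nonneg_right hy.2 hpb
  -- splitting lemma
  have hsplit : ∀ (F : ℝ → ℝ) (c : ℝ), 0 < c → IntegrableOn F (Ioi 0) →
      ∫ y in Ioi (0:ℝ), F y = (∫ y in Ioc (0:ℝ) c, F y) + ∫ y in Ioi c, F y := by
    intro F c hc hF
    rw [← Ioc_union_Ioi_eq_Ioi hc.le,
      setIntegral_union (Ioc_disjoint_Ioi le_rfl) measurableSet_Ioi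
        (hF.mono_set Ioc_subset_Ioi_self) (hF.mono_set (Ioi_subset_Ioi hc.le))]
  -- tail rewrite
  have htail : ∫ y in Ioi B, f (h * y) * p y = ∫ y in Ioi B, f (h * y) * y ^ (-1 - α) :=
    setIntegral_congr_fun measurableSet_Ioi (fun y hy => by rw [hp_tail y (le_of_lt hy)])
  -- change of variables
  have key : ∫ y in Ioi B, f (h * y) * y ^ (-1 - α)
      = h ^ α * ∫ z in Ioi (B * h), f z * z ^ (-1 - α) := by
    have h2 := MeasureTheory.integral_comp_mul_left_Ioi (fun z => f z * z ^ (-1 - α)) B hh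
    simp only [smul_eq_mul] at h2
    have e1 : ∫ y in Ioi B, f (h * y) * (h * y) ^ (-1 - α)
        = ∫ y in Ioi B, h ^ (-1 - α) * (f (h * y) * y ^ (-1 - α)) := by
      apply setIntegral_congr_fun measurableSet_Ioi
      intro y hy
      have hy0 : (0:ℝ) < y := lt_trans hB hy
      show f (h * y) * (h * y) ^ (-1 - α) = h ^ (-1 - α) * (f (h * y) * y ^ (-1 - α))
      rw [Real.mul_rpow hh.le hy0.le]; ring
    rw [e1, MeasureTheory.integral_const_mul] at h2
    have hpowa : h ^ ((1:ℝ) + α) * h ^ (-1 - α) = 1 := by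
      rw [← Real.rpow_add hh]; norm_num
    have hpowb : h ^ ((1:ℝ) + α) * h⁻¹ = h ^ α := by
      rw [← Real.rpow_neg_one h, ← Real.rpow_add hh]; norm_num
    calc ∫ y in Ioi B, f (h * y) * y ^ (-1 - α)
        = h ^ ((1:ℝ) + α) * h ^ (-1 - α) * ∫ y in Ioi B, f (h * y) * y ^ (-1 - α) := by
          rw [hpowa, one_mul]
      _ = h ^ ((1:ℝ) + α) * (h ^ (-1 - α) * ∫ y in Ioi B, f (h * y) * y ^ (-1 - α)) := by ring
      _ = h ^ ((1:ℝ) + α) * (h⁻¹ * ∫ z in Ioi (h * B), f z * z ^ (-1 - α)) := by rw [h2]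
      _ = h ^ α * ∫ z in Ioi (B * h), f z * z ^ (-1 - α) := by
          rw [← mul_assoc, hpowb, mul_comm h B]
  -- reduce the difference
  have hpow0 : h ^ (-α) * h ^ α = 1 := by rw [← Real.rpow_add hh]; norm_num
  have hmain : h ^ (-α) * (∫ y in Ioi (0:ℝ), f (h * y) * p y)
      - ∫ y in Ioi (0:ℝ), f y * y ^ (-1 - α)
      = h ^ (-α) * (∫ y in Ioc (0:ℝ) B, f (h * y) * p y)
        - ∫ y in Ioc (0:ℝ) (B * h), f y * y ^ (-1 - α) := by
    rw [hsplit _ B hB hint1, hsplit _ (B * h) hBh hint_g, htail, key]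
    set A := ∫ y in Ioc (0:ℝ) B, f (h * y) * p y
    set S := ∫ y in Ioc (0:ℝ) (B * h), f y * y ^ (-1 - α)
    set T := ∫ z in Ioi (B * h), f z * z ^ (-1 - α)
    calc h ^ (-α) * (A + h ^ α * T) - (S + T)
        = h ^ (-α) * A + (h ^ (-α) * h ^ α) * T - S - T := by ring
      _ = h ^ (-α) * A - S := by rw [hpow0]; ring
  have habs : ∀ (s : Set ℝ) (F : ℝ → ℝ), |∫ y in s, F y| ≤ ∫ y in s, |F y| := by
    intro s F
    simpa [Real.norm_eq_abs] using norm_integral_le_integral_norm (μ := volume.restrict s) F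
  -- bound on A
  have hA : |∫ y in Ioc (0:ℝ) B, f (h * y) * p y|
      ≤ L * h * ∫ y in Ioc (0:ℝ) B, y * p y := by
    calc |∫ y in Ioc (0:ℝ) B, f (h * y) * p y|
        ≤ ∫ y in Ioc (0:ℝ) B, |f (h * y) * p y| := habs _ _
      _ ≤ ∫ y in Ioc (0:ℝ) B, L * h * (y * p y) := by
          apply setIntegral_mono_on ((hint1.mono_set Ioc_subset_Ioi_self).abs)
            (hint_yp.const_mul (L * h)) measurableSet_Ioc
          intro y hy
          have hy0 : (0:ℝ) < y := hy.1
          have hpb := hp_nonneg y hy0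
          have hlip := hf_lip (h * y) ⟨mul_nonneg hh.le hy0.le, by nlinarith [hy.2]⟩
          rw [abs_mul, abs_of_nonneg hpb]
          calc |f (h * y)| * p y ≤ L * (h * y) * p y := mul_le_mul_of_nonneg_right hlip hpb
            _ = L * h * (y * p y) := by ring
      _ = L * h * ∫ y in Ioc (0:ℝ) B, y * p y := MeasureTheory.integral_const_mul _ _
  -- bound on S
  have hcomp : ∫ y in Ioc (0:ℝ) (B * h), y ^ (-α) = (B * h) ^ (1 - α) / (1 - α) := by
    rw [← intervalIntegral.integral_of_le hBh.le,
      integral_rpow (Or.inl (by linarith : (-1:ℝ) < -α)),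
      Real.zero_rpow (by linarith : -α + 1 ≠ 0)]
    rw [show -α + 1 = 1 - α by ring, sub_zero]
  have hS : |∫ y in Ioc (0:ℝ) (B * h), f y * y ^ (-1 - α)|
      ≤ L * ((B * h) ^ (1 - α) / (1 - α)) := by
    calc |∫ y in Ioc (0:ℝ) (B * h), f y * y ^ (-1 - α)|
        ≤ ∫ y in Ioc (0:ℝ) (B * h), |f y * y ^ (-1 - α)| := habs _ _
      _ ≤ ∫ y in Ioc (0:ℝ) (B * h), L * y ^ (-α) := by
          apply setIntegral_mono_on hint_g_small.abs (hrpow_int.const_mul L) measurableSet_Ioc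
          intro y hy
          have hy0 : (0:ℝ) < y := hy.1
          have hrp : (0:ℝ) ≤ y ^ (-1 - α) := Real.rpow_nonneg hy0.le _
          rw [abs_mul, abs_of_nonneg hrp]
          calc |f y| * y ^ (-1 - α) ≤ L * y * y ^ (-1 - α) :=
                mul_le_mul_of_nonneg_right (hf_lip y ⟨hy0.le, hy.2⟩) hrp
            _ = L * y ^ (-α) := by rw [mul_assoc, hyy y hy0]
      _ = L * ((B * h) ^ (1 - α) / (1 - α)) := by
          rw [MeasureTheory.integral_const_mul, hcomp]
  -- conclude
  have hpowpos : (0:ℝ) ≤ h ^ (-α) := (Real.rpow_pos_of_pos hh _).le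
  have hpow1 : h ^ (-α) * h = h ^ (1 - α) := by
    rw [show (1:ℝ) - α = -α + 1 by ring, Real.rpow_add hh, Real.rpow_one]
  rw [hmain]
  calc |h ^ (-α) * (∫ y in Ioc (0:ℝ) B, f (h * y) * p y)
        - ∫ y in Ioc (0:ℝ) (B * h), f y * y ^ (-1 - α)|
      ≤ |h ^ (-α) * (∫ y in Ioc (0:ℝ) B, f (h * y) * p y)|
        + |∫ y in Ioc (0:ℝ) (B * h), f y * y ^ (-1 - α)| := abs_sub _ _
    _ = h ^ (-α) * |∫ y in Ioc (0:ℝ) B, f (h * y) * p y|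
        + |∫ y in Ioc (0:ℝ) (B * h), f y * y ^ (-1 - α)| := by
        rw [abs_mul, abs_of_nonneg hpowpos]
    _ ≤ h ^ (-α) * (L * h * ∫ y in Ioc (0:ℝ) B, y * p y)
        + L * ((B * h) ^ (1 - α) / (1 - α)) :=
        add_le_add (mul_le_mul_of_nonneg_left hA hpowpos) hS
    _ = (B ^ (1 - α) / (1 - α) + ∫ y in Ioc (0:ℝ) B, y * p y) * L * h ^ (1 - α) := by
        rw [Real.mul_rpow hB.le hh.le]
        linear_combination (L * ∫ y in Ioc (0:ℝ) B, y * p y) * hpow1
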